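/- Let N be a positive natural number, and for each agent i ∈ {1,…,N} let U_i be a nonempty finite action set and Q_i : U_i → ℝ an individual action-value function, with ū_i a maximizer of Q_i over U_i and ū = (ū_1,…,ū_N). Let Q, Q' : (Π i, U_i) → ℝ satisfy: (a) Q'(ū) ≥ Q'(u) for every joint action u; (b) Q'(ū) = Q(ū); and (c) Q(ū) ≥ Q'(u) ≥ Q(u) for every joint action u. Then the maxima of Q and Q' over all joint actions coincide and are both attained at ū: max_u Q(u) = max_u Q'(u) = Q(ū) = Q'(ū). -/
import Mathlib

theorem maxima_coincide
    (N : ℕ) (hN : 0 < N)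
    (U : Fin N → Type*) [∀ i, Fintype (U i)] [∀ i, Nonempty (U i)]
    (Qi : ∀ i, U i → ℝ)
    (ubar : ∀ i, U i)
    (hubar : ∀ i, ∀ u : U i, Qi i u ≤ Qi i (ubar i))
    (Q Q' : (∀ i, U i) → ℝ)
    (hmono : ∀ u : ∀ i, U i, Q' u ≤ Q' ubar)
    (heq : Q' ubar = Q ubar)
    (hsand : ∀ u : ∀ i, U i, Q u ≤ Q' u ∧ Q' u ≤ Q ubar) :
    (Finset.univ : Finset (∀ i, U i)).sup' Finset.univ_nonempty Q =
      (Finset.univ : Finset (∀ i, U i)).sup' Finset.univ_nonempty Q' ∧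
    (Finset.univ : Finset (∀ i, U i)).sup' Finset.univ_nonempty Q' = Q ubar ∧
    Q ubar = Q' ubar := by
  have hQ : (Finset.univ : Finset (∀ i, U i)).sup' Finset.univ_nonempty Q = Q ubar := by
    apply le_antisymm
    · exact Finset.sup'_le _ _ fun u _ => le_trans (hsand u).1 (hsand u).2
    · exact Finset.le_sup' Q (Finset.mem_univ ubar)
  have hQ' : (Finset.univ : Finset (∀ i, U i)).sup' Finset.univ_nonempty Q' = Q ubar := by
    apply le_antisymm
    · exact Finset.sup'_le _ _ fun u _ => (hsand u).2
    · rw [← heq]; exact Finset.le_sup' Q' (Finset.mem_univ ubar)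
  exact ⟨hQ.trans hQ'.symm, hQ', heq.symm⟩
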